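/- Let n ≥ 4, let π be a nontrivial partition of {1,…,n} with a block π₁ containing at least two elements a, b, and let c, d be two distinct elements of some block of π with {c,d} ≠ {a,b} and {c,d} ∩ {a,b} = ∅. If c, d ∈ π₁, then the transposition product g = (a c)(b d) stabilizes π and maps the partition ab̄ (block {a,b}, rest singletons) to the partition cd̄ (block {c,d}, rest singletons). -/

import Mathlib

theorem stmt_12 {n : ℕ} (hn : 4 ≤ n)
    (π : Setoid (Fin n)) (hπ : π ≠ ⊤)
    (a b c d : Fin n) (hab : a ≠ b) (hcd : c ≠ d)
    (hca : c ≠ a) (hcb : c ≠ b) (hda : d ≠ a) (hdb : d ≠ b)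
    (h1 : π.r a b) (h2 : π.r a c) (h3 : π.r a d) :
    (∀ x y : Fin n,
      π.r ((Equiv.swap a c * Equiv.swap b d) x) ((Equiv.swap a c * Equiv.swap b d) y)
        ↔ π.r x y) ∧
    (∀ x y : Fin n,
      (x = y ∨ (x = a ∧ y = b) ∨ (x = b ∧ y = a)) ↔
      ((Equiv.swap a c * Equiv.swap b d) x = (Equiv.swap a c * Equiv.swap b d) y ∨
        ((Equiv.swap a c * Equiv.swap b d) x = c ∧ (Equiv.swap a c * Equiv.swap b d) y = d) ∨
        ((Equiv.swap a c * Equiv.swap b d) x = d ∧ (Equiv.swap a c * Equiv.swap b d) y = c))) := by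
  set g := Equiv.swap a c * Equiv.swap b d with hg
  have hga : g a = c := by
    simp [hg, Equiv.Perm.mul_apply, Equiv.swap_apply_of_ne_of_ne hab hda.symm]
  have hgb : g b = d := by
    simp [hg, Equiv.Perm.mul_apply, Equiv.swap_apply_of_ne_of_ne hda hcd.symm]
  have hgc : g c = a := by
    simp [hg, Equiv.Perm.mul_apply, Equiv.swap_apply_of_ne_of_ne hcb hcd]
  have hgd : g d = b := by
    simp [hg, Equiv.Perm.mul_apply, Equiv.swap_apply_of_ne_of_ne hab.symm hcb.symm]
  have key : ∀ x : Fin n, π.r x (g x) := by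
    intro x
    by_cases hxa : x = a
    · subst hxa; rw [hga]; exact h2
    by_cases hxb : x = b
    · subst hxb; rw [hgb]; exact π.trans (π.symm h1) h3
    by_cases hxc : x = c
    · subst hxc; rw [hgc]; exact π.symm h2
    by_cases hxd : x = d
    · subst hxd; rw [hgd]; exact π.trans (π.symm h3) h1
    · have : g x = x := by
        simp [hg, Equiv.Perm.mul_apply, Equiv.swap_apply_of_ne_of_ne hxb hxd,
          Equiv.swap_apply_of_ne_of_ne hxa hxc]
      rw [this]
  refine ⟨fun x y => ⟨fun h => π.trans (key x) (π.trans h (π.symm (key y))),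
    fun h => π.trans (π.symm (key x)) (π.trans h (key y))⟩, fun x y => ?_⟩
  have hinj : ∀ u v : Fin n, g u = g v ↔ u = v := fun u v => g.injective.eq_iff
  have e1 : g x = c ↔ x = a := by rw [← hga, hinj]
  have e2 : g y = d ↔ y = b := by rw [← hgb, hinj]
  have e3 : g x = d ↔ x = b := by rw [← hgb, hinj]
  have e4 : g y = c ↔ y = a := by rw [← hga, hinj]
  rw [hinj, e1, e2, e3, e4]
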